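/- For each integer n ≥ 4, the curve given in polar coordinates by r(θ) = cosⁿ(π/n) secⁿ((θ−π)/n) for θ ∈ (0,π) is concave: writing x(θ) = r(θ)cos θ and y(θ) = r(θ)sin θ, the second derivative d²y/dx² equals −((n−1)/n) secⁿ(π/n) cos^{n+1}((θ−π)/n) csc³((π+(n−1)θ)/n), which is negative on (0,π). -/

import Mathlib

open Real

set_option maxHeartbeats 1000000 in
theorem stmt_13 (n : ℕ) (hn : 4 ≤ n) (θ : ℝ) (hθ : θ ∈ Set.Ioo 0 π) :
    let x : ℝ → ℝ := fun s => Real.cos (π / n) ^ n * ((Real.cos ((s - π) / n))⁻¹) ^ n * Real.cos s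
    let y : ℝ → ℝ := fun s => Real.cos (π / n) ^ n * ((Real.cos ((s - π) / n))⁻¹) ^ n * Real.sin s
    let d2 : ℝ :=
      (deriv x θ * deriv (deriv y) θ - deriv y θ * deriv (deriv x) θ) / (deriv x θ) ^ 3
    d2 = -(((n : ℝ) - 1) / n) * ((Real.cos (π / n))⁻¹) ^ n *
          (Real.cos ((θ - π) / n)) ^ (n + 1) *
          ((Real.sin ((π + ((n : ℝ) - 1) * θ) / n))⁻¹) ^ 3 ∧
      d2 < 0 := by
  obtain ⟨hθ0, hθπ⟩ := hθ
  obtain ⟨m, rfl⟩ : ∃ m, n = m + 1 := ⟨n - 1, by omega⟩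
  have hm : 3 ≤ m := by omega
  have hm3 : (3:ℝ) ≤ (m:ℝ) := by exact_mod_cast hm
  intro x y d2
  set N : ℝ := ((m + 1 : ℕ) : ℝ) with hNdef
  have hNm : N = (m:ℝ) + 1 := by rw [hNdef]; push_cast; ring
  have hN4 : (4:ℝ) ≤ N := by rw [hNm]; linarith
  have hN0 : (0:ℝ) < N := by linarith
  have hNne : N ≠ 0 := ne_of_gt hN0
  have hπ := pi_pos
  have hmm : ((m:ℝ) + 1 - 1) = (m:ℝ) := by ring
  have hC0 : 0 < Real.cos (π / N) := by
    apply Real.cos_pos_of_mem_Ioo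
    constructor
    · have : 0 < π / N := by positivity
      linarith
    · rw [div_lt_div_iff₀ hN0 two_pos]; nlinarith
  have hcv0 : 0 < Real.cos ((θ - π) / N) := by
    apply Real.cos_pos_of_mem_Ioo
    constructor
    · rw [lt_div_iff₀ hN0]; nlinarith
    · rw [div_lt_iff₀ hN0]; nlinarith
  have hcvne : Real.cos ((θ - π) / N) ≠ 0 := ne_of_gt hcv0
  have hψeq : (π + (N - 1) * θ) / N = θ - (θ - π) / N := by
    field_simp; ring
  have hsψ0 : 0 < Real.sin ((π + (N - 1) * θ) / N) := by
    apply Real.sin_pos_of_pos_of_lt_pi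
    · apply div_pos _ hN0
      nlinarith [mul_pos (show (0:ℝ) < N - 1 by linarith) hθ0]
    · rw [div_lt_iff₀ hN0]
      nlinarith [mul_lt_mul_of_pos_left hθπ (show (0:ℝ) < N - 1 by linarith)]
  have hsψne : Real.sin ((π + (N - 1) * θ) / N) ≠ 0 := ne_of_gt hsψ0
  set c : ℝ := Real.cos (π / N) ^ (m + 1) with hcdef
  have hlin : ∀ s : ℝ, HasDerivAt (fun t : ℝ => (t - π) / N) (1 / N) s := fun s => by
    simpa using ((hasDerivAt_id s).sub_const π).div_const N
  have hcos : ∀ s : ℝ, HasDerivAt (fun t : ℝ => Real.cos ((t - π) / N))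
      (-Real.sin ((s - π) / N) * (1 / N)) s := fun s => (hlin s).cos
  have hinv : ∀ s : ℝ, Real.cos ((s - π) / N) ≠ 0 →
      HasDerivAt (fun t : ℝ => (Real.cos ((t - π) / N))⁻¹)
        (Real.sin ((s - π) / N) * (1 / N) / (Real.cos ((s - π) / N)) ^ 2) s := by
    intro s hs
    refine ((hcos s).inv hs).congr_deriv ?_
    ring
  have hr : ∀ s : ℝ, Real.cos ((s - π) / N) ≠ 0 →
      HasDerivAt (fun t : ℝ => c * ((Real.cos ((t - π) / N))⁻¹) ^ (m + 1))
        (c * Real.sin ((s - π) / N) * ((Real.cos ((s - π) / N))⁻¹) ^ (m + 2)) s := by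
    intro s hs
    refine (((hinv s hs).pow (m + 1)).const_mul c).congr_deriv ?_
    have h1 : (m + 1 - 1 : ℕ) = m := by omega
    rw [h1, ← hNdef]
    simp only [inv_pow]
    field_simp
    ring
  have hr' : ∀ s : ℝ, Real.cos ((s - π) / N) ≠ 0 →
      HasDerivAt (fun t : ℝ => c * Real.sin ((t - π) / N) * ((Real.cos ((t - π) / N))⁻¹) ^ (m + 2))
        (c / N * (((Real.cos ((s - π) / N))⁻¹) ^ (m + 1)
          + ((m : ℝ) + 2) * Real.sin ((s - π) / N) ^ 2 * ((Real.cos ((s - π) / N))⁻¹) ^ (m + 3))) s := by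
    intro s hs
    have h1 : HasDerivAt (fun t : ℝ => c * Real.sin ((t - π) / N))
        (c * (Real.cos ((s - π) / N) * (1 / N))) s := ((hlin s).sin).const_mul c
    refine (h1.mul ((hinv s hs).pow (m + 2))).congr_deriv ?_
    have h2 : (m + 2 - 1 : ℕ) = m + 1 := by omega
    rw [h2]
    have h3 : ((m + 2 : ℕ) : ℝ) = (m:ℝ) + 2 := by push_cast; ring
    rw [h3]
    simp only [inv_pow, Pi.pow_apply]
    field_simp
    ring
  -- first derivative functions
  have hx1 : ∀ s : ℝ, Real.cos ((s - π) / N) ≠ 0 → HasDerivAt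
      (fun t : ℝ => c * ((Real.cos ((t - π) / N))⁻¹) ^ (m + 1) * Real.cos t)
      (c * Real.sin ((s - π) / N) * ((Real.cos ((s - π) / N))⁻¹) ^ (m + 2) * Real.cos s
        - c * ((Real.cos ((s - π) / N))⁻¹) ^ (m + 1) * Real.sin s) s := by
    intro s hs
    refine ((hr s hs).mul (Real.hasDerivAt_cos s)).congr_deriv ?_
    ring
  have hy1 : ∀ s : ℝ, Real.cos ((s - π) / N) ≠ 0 → HasDerivAt
      (fun t : ℝ => c * ((Real.cos ((t - π) / N))⁻¹) ^ (m + 1) * Real.sin t)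
      (c * Real.sin ((s - π) / N) * ((Real.cos ((s - π) / N))⁻¹) ^ (m + 2) * Real.sin s
        + c * ((Real.cos ((s - π) / N))⁻¹) ^ (m + 1) * Real.cos s) s := by
    intro s hs
    refine ((hr s hs).mul (Real.hasDerivAt_sin s)).congr_deriv ?_
    try ring
  -- second derivatives
  have hx2 : ∀ s : ℝ, Real.cos ((s - π) / N) ≠ 0 → HasDerivAt
      (fun t : ℝ => c * Real.sin ((t - π) / N) * ((Real.cos ((t - π) / N))⁻¹) ^ (m + 2) * Real.cos t
        - c * ((Real.cos ((t - π) / N))⁻¹) ^ (m + 1) * Real.sin t)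
      (c / N * (((Real.cos ((s - π) / N))⁻¹) ^ (m + 1)
          + ((m : ℝ) + 2) * Real.sin ((s - π) / N) ^ 2 * ((Real.cos ((s - π) / N))⁻¹) ^ (m + 3)) * Real.cos s
        - 2 * (c * Real.sin ((s - π) / N) * ((Real.cos ((s - π) / N))⁻¹) ^ (m + 2)) * Real.sin s
        - c * ((Real.cos ((s - π) / N))⁻¹) ^ (m + 1) * Real.cos s) s := by
    intro s hs
    refine (((hr' s hs).mul (Real.hasDerivAt_cos s)).sub ((hr s hs).mul (Real.hasDerivAt_sin s))).congr_deriv ?_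
    ring
  have hy2 : ∀ s : ℝ, Real.cos ((s - π) / N) ≠ 0 → HasDerivAt
      (fun t : ℝ => c * Real.sin ((t - π) / N) * ((Real.cos ((t - π) / N))⁻¹) ^ (m + 2) * Real.sin t
        + c * ((Real.cos ((t - π) / N))⁻¹) ^ (m + 1) * Real.cos t)
      (c / N * (((Real.cos ((s - π) / N))⁻¹) ^ (m + 1)
          + ((m : ℝ) + 2) * Real.sin ((s - π) / N) ^ 2 * ((Real.cos ((s - π) / N))⁻¹) ^ (m + 3)) * Real.sin s
        + 2 * (c * Real.sin ((s - π) / N) * ((Real.cos ((s - π) / N))⁻¹) ^ (m + 2)) * Real.cos s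
        - c * ((Real.cos ((s - π) / N))⁻¹) ^ (m + 1) * Real.sin s) s := by
    intro s hs
    refine (((hr' s hs).mul (Real.hasDerivAt_sin s)).add ((hr s hs).mul (Real.hasDerivAt_cos s))).congr_deriv ?_
    ring
  -- open set and eventual equality
  have hUopen : IsOpen {s : ℝ | Real.cos ((s - π) / N) ≠ 0} := by
    have hc : Continuous fun s : ℝ => Real.cos ((s - π) / N) := by fun_prop
    exact IsOpen.preimage hc isOpen_ne
  have hU : {s : ℝ | Real.cos ((s - π) / N) ≠ 0} ∈ nhds θ := hUopen.mem_nhds hcvne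
  have hevx : deriv (fun t : ℝ => c * ((Real.cos ((t - π) / N))⁻¹) ^ (m + 1) * Real.cos t)
      =ᶠ[nhds θ] (fun s : ℝ => c * Real.sin ((s - π) / N) * ((Real.cos ((s - π) / N))⁻¹) ^ (m + 2) * Real.cos s
        - c * ((Real.cos ((s - π) / N))⁻¹) ^ (m + 1) * Real.sin s) :=
    Filter.eventuallyEq_of_mem hU (fun s hs => (hx1 s hs).deriv)
  have hevy : deriv (fun t : ℝ => c * ((Real.cos ((t - π) / N))⁻¹) ^ (m + 1) * Real.sin t)
      =ᶠ[nhds θ] (fun s : ℝ => c * Real.sin ((s - π) / N) * ((Real.cos ((s - π) / N))⁻¹) ^ (m + 2) * Real.sin s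
        + c * ((Real.cos ((s - π) / N))⁻¹) ^ (m + 1) * Real.cos s) :=
    Filter.eventuallyEq_of_mem hU (fun s hs => (hy1 s hs).deriv)
  have hDX : deriv (fun t : ℝ => c * ((Real.cos ((t - π) / N))⁻¹) ^ (m + 1) * Real.cos t) θ
      = c * Real.sin ((θ - π) / N) * ((Real.cos ((θ - π) / N))⁻¹) ^ (m + 2) * Real.cos θ
        - c * ((Real.cos ((θ - π) / N))⁻¹) ^ (m + 1) * Real.sin θ := (hx1 θ hcvne).deriv
  have hDY : deriv (fun t : ℝ => c * ((Real.cos ((t - π) / N))⁻¹) ^ (m + 1) * Real.sin t) θ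
      = c * Real.sin ((θ - π) / N) * ((Real.cos ((θ - π) / N))⁻¹) ^ (m + 2) * Real.sin θ
        + c * ((Real.cos ((θ - π) / N))⁻¹) ^ (m + 1) * Real.cos θ := (hy1 θ hcvne).deriv
  have hDDX : deriv (deriv (fun t : ℝ => c * ((Real.cos ((t - π) / N))⁻¹) ^ (m + 1) * Real.cos t)) θ
      = c / N * (((Real.cos ((θ - π) / N))⁻¹) ^ (m + 1)
          + ((m : ℝ) + 2) * Real.sin ((θ - π) / N) ^ 2 * ((Real.cos ((θ - π) / N))⁻¹) ^ (m + 3)) * Real.cos θ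
        - 2 * (c * Real.sin ((θ - π) / N) * ((Real.cos ((θ - π) / N))⁻¹) ^ (m + 2)) * Real.sin θ
        - c * ((Real.cos ((θ - π) / N))⁻¹) ^ (m + 1) * Real.cos θ := by
    rw [hevx.deriv_eq]
    exact (hx2 θ hcvne).deriv
  have hDDY : deriv (deriv (fun t : ℝ => c * ((Real.cos ((t - π) / N))⁻¹) ^ (m + 1) * Real.sin t)) θ
      = c / N * (((Real.cos ((θ - π) / N))⁻¹) ^ (m + 1)
          + ((m : ℝ) + 2) * Real.sin ((θ - π) / N) ^ 2 * ((Real.cos ((θ - π) / N))⁻¹) ^ (m + 3)) * Real.sin θ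
        + 2 * (c * Real.sin ((θ - π) / N) * ((Real.cos ((θ - π) / N))⁻¹) ^ (m + 2)) * Real.cos θ
        - c * ((Real.cos ((θ - π) / N))⁻¹) ^ (m + 1) * Real.sin θ := by
    rw [hevy.deriv_eq]
    exact (hy2 θ hcvne).deriv
  -- abbreviations for readability in the final computation
  have hxe : x = (fun t : ℝ => c * ((Real.cos ((t - π) / N))⁻¹) ^ (m + 1) * Real.cos t) := rfl
  have hye : y = (fun t : ℝ => c * ((Real.cos ((t - π) / N))⁻¹) ^ (m + 1) * Real.sin t) := rfl
  have hcvinv : Real.cos ((θ - π) / N) * (Real.cos ((θ - π) / N))⁻¹ = 1 := mul_inv_cancel₀ hcvne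
  have hmain : (deriv x θ * deriv (deriv y) θ - deriv y θ * deriv (deriv x) θ) / (deriv x θ) ^ 3
      = -((N - 1) / N) * ((Real.cos (π / N))⁻¹) ^ (m + 1) *
          (Real.cos ((θ - π) / N)) ^ (m + 1 + 1) *
          ((Real.sin ((π + (N - 1) * θ) / N))⁻¹) ^ 3 := by
    rw [hxe, hye, hDX, hDY, hDDX, hDDY]
    have e1 : (c * Real.sin ((θ - π) / N) * ((Real.cos ((θ - π) / N))⁻¹) ^ (m + 2) * Real.cos θ
        - c * ((Real.cos ((θ - π) / N))⁻¹) ^ (m + 1) * Real.sin θ) *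
        (c / N * (((Real.cos ((θ - π) / N))⁻¹) ^ (m + 1)
          + ((m : ℝ) + 2) * Real.sin ((θ - π) / N) ^ 2 * ((Real.cos ((θ - π) / N))⁻¹) ^ (m + 3)) * Real.sin θ
        + 2 * (c * Real.sin ((θ - π) / N) * ((Real.cos ((θ - π) / N))⁻¹) ^ (m + 2)) * Real.cos θ
        - c * ((Real.cos ((θ - π) / N))⁻¹) ^ (m + 1) * Real.sin θ)
        - (c * Real.sin ((θ - π) / N) * ((Real.cos ((θ - π) / N))⁻¹) ^ (m + 2) * Real.sin θ
        + c * ((Real.cos ((θ - π) / N))⁻¹) ^ (m + 1) * Real.cos θ) *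
        (c / N * (((Real.cos ((θ - π) / N))⁻¹) ^ (m + 1)
          + ((m : ℝ) + 2) * Real.sin ((θ - π) / N) ^ 2 * ((Real.cos ((θ - π) / N))⁻¹) ^ (m + 3)) * Real.cos θ
        - 2 * (c * Real.sin ((θ - π) / N) * ((Real.cos ((θ - π) / N))⁻¹) ^ (m + 2)) * Real.sin θ
        - c * ((Real.cos ((θ - π) / N))⁻¹) ^ (m + 1) * Real.cos θ)
        = (c * ((Real.cos ((θ - π) / N))⁻¹) ^ (m + 1)) ^ 2
          + 2 * (c * Real.sin ((θ - π) / N) * ((Real.cos ((θ - π) / N))⁻¹) ^ (m + 2)) ^ 2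
          - (c * ((Real.cos ((θ - π) / N))⁻¹) ^ (m + 1)) *
            (c / N * (((Real.cos ((θ - π) / N))⁻¹) ^ (m + 1)
              + ((m : ℝ) + 2) * Real.sin ((θ - π) / N) ^ 2 * ((Real.cos ((θ - π) / N))⁻¹) ^ (m + 3))) := by
      linear_combination ((c * ((Real.cos ((θ - π) / N))⁻¹) ^ (m + 1)) ^ 2
          + 2 * (c * Real.sin ((θ - π) / N) * ((Real.cos ((θ - π) / N))⁻¹) ^ (m + 2)) ^ 2
          - (c * ((Real.cos ((θ - π) / N))⁻¹) ^ (m + 1)) *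
            (c / N * (((Real.cos ((θ - π) / N))⁻¹) ^ (m + 1)
              + ((m : ℝ) + 2) * Real.sin ((θ - π) / N) ^ 2 * ((Real.cos ((θ - π) / N))⁻¹) ^ (m + 3)))) *
        Real.sin_sq_add_cos_sq θ
    have e2 : (c * ((Real.cos ((θ - π) / N))⁻¹) ^ (m + 1)) ^ 2
          + 2 * (c * Real.sin ((θ - π) / N) * ((Real.cos ((θ - π) / N))⁻¹) ^ (m + 2)) ^ 2
          - (c * ((Real.cos ((θ - π) / N))⁻¹) ^ (m + 1)) *
            (c / N * (((Real.cos ((θ - π) / N))⁻¹) ^ (m + 1)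
              + ((m : ℝ) + 2) * Real.sin ((θ - π) / N) ^ 2 * ((Real.cos ((θ - π) / N))⁻¹) ^ (m + 3)))
        = ((N - 1) / N) * c ^ 2 * ((Real.cos ((θ - π) / N))⁻¹) ^ (2 * m + 4) := by
      have hA : Real.sin ((θ - π) / N) ^ 2 + Real.cos ((θ - π) / N) ^ 2 = 1 :=
        Real.sin_sq_add_cos_sq _
      have hD : N * N⁻¹ = 1 := mul_inv_cancel₀ hNne
      linear_combination
        (c ^ 2 * ((Real.cos ((θ - π) / N))⁻¹) ^ (2 * m + 4) * (1 - N⁻¹)) * hA +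
        (c ^ 2 * ((Real.cos ((θ - π) / N))⁻¹) ^ (2 * m + 4) *
          (-(Real.sin ((θ - π) / N) ^ 2) - 1)) * hD +
        (c ^ 2 * ((Real.cos ((θ - π) / N))⁻¹) ^ (2 * m + 4) *
          Real.sin ((θ - π) / N) ^ 2 * N⁻¹) * hNm -
        ((1 - N⁻¹) * c ^ 2 * ((Real.cos ((θ - π) / N))⁻¹) ^ (2 * m + 2) *
          (((Real.cos ((θ - π) / N))⁻¹) * Real.cos ((θ - π) / N) + 1)) * hcvinv
    have e3 : c * Real.sin ((θ - π) / N) * ((Real.cos ((θ - π) / N))⁻¹) ^ (m + 2) * Real.cos θ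
        - c * ((Real.cos ((θ - π) / N))⁻¹) ^ (m + 1) * Real.sin θ
        = -(c * ((Real.cos ((θ - π) / N))⁻¹) ^ (m + 2) * Real.sin ((π + (N - 1) * θ) / N)) := by
      rw [hψeq, Real.sin_sub]
      simp only [inv_pow]
      field_simp
      ring
    rw [e1, e2, e3, hcdef]
    simp only [inv_pow]
    field_simp
    ring
  refine ⟨hmain, ?_⟩
  show (deriv x θ * deriv (deriv y) θ - deriv y θ * deriv (deriv x) θ) / (deriv x θ) ^ 3 < 0
  rw [hmain]
  have hpos : 0 < ((N - 1) / N) * ((Real.cos (π / N))⁻¹) ^ (m + 1) *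
      (Real.cos ((θ - π) / N)) ^ (m + 1 + 1) *
      ((Real.sin ((π + (N - 1) * θ) / N))⁻¹) ^ 3 := by
    apply mul_pos (mul_pos (mul_pos (div_pos (by linarith) hN0)
      (pow_pos (inv_pos.mpr hC0) _)) (pow_pos hcv0 _)) (pow_pos (inv_pos.mpr hsψ0) _)
  nlinarith [hpos]
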